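/- The convolution of measures H_{(-2,2)} ⋆ H_{(-2,0)} ⋆ H_{(-2,-2)} ⋆ H_{(0,-2)} on ℝ² is absolutely continuous with respect to the 2-dimensional Lebesgue measure, with density the function p; that is, this convolution equals the Lebesgue measure on ℝ² weighted by the density p(r,s). -/

import Mathlib

open MeasureTheory Set ENNReal

/-- The piecewise-polynomial density `p(r,s)`. -/
noncomputable def pDen (r s : ℝ) : ℝ :=
  if 0 ≤ s ∧ s ≤ -r then (r + s) ^ 2 / 64
  else if r ≤ s ∧ s ≤ 0 then (r ^ 2 + 2 * r * s - s ^ 2) / 64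
  else if s ≤ r ∧ r ≤ 0 then r ^ 2 / 32
  else 0

/-- `H_v`: the pushforward of Lebesgue measure on `[0, ∞)` under `t ↦ t • v`,
regarded as a measure on `ℝ²`. -/
noncomputable def Hmeas (v : ℝ × ℝ) : Measure (ℝ × ℝ) :=
  Measure.map (fun t : ℝ => t • v) (volume.restrict (Set.Ici (0 : ℝ)))


noncomputable def gp (r s y : ℝ) : ℝ := max (min (-y - r) (y - s)) 0

lemma cont_gp (r s : ℝ) : Continuous (gp r s) := by
  unfold gp; fun_prop

lemma ofReal_max_zero (x : ℝ) : ENNReal.ofReal (max x 0) = ENNReal.ofReal x := by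
  rcases le_total x 0 with h | h
  · simp [max_eq_right h, ENNReal.ofReal_eq_zero.2 h]
  · rw [max_eq_left h]

lemma int_Ici (r s : ℝ) (hr : r ≤ 0) :
    ∫⁻ y in Ici (0:ℝ), ENNReal.ofReal (min (-y - r) (y - s))
      = ENNReal.ofReal (∫ y in (0:ℝ)..(-r), gp r s y) := by
  have h0 : (0:ℝ) ≤ -r := by linarith
  have hcongr : ∀ y : ℝ, ENNReal.ofReal (min (-y - r) (y - s)) = ENNReal.ofReal (gp r s y) :=
    fun y => (ofReal_max_zero _).symm
  simp_rw [hcongr]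
  rw [← Set.Icc_union_Ioi_eq_Ici h0,
    lintegral_union measurableSet_Ioi ((Set.Iic_disjoint_Ioi le_rfl).mono Set.Icc_subset_Iic_self le_rfl)]
  have hzero : ∫⁻ y in Ioi (-r), ENNReal.ofReal (gp r s y) = 0 := by
    rw [setLIntegral_congr_fun measurableSet_Ioi
      (fun y (hy : y ∈ Ioi (-r)) => ?_), lintegral_zero]
    have : min (-y - r) (y - s) ≤ 0 := le_trans (min_le_left _ _) (by simp at hy; linarith)
    rw [gp, max_eq_right this, ENNReal.ofReal_zero]
  rw [hzero, add_zero, ← ofReal_integral_eq_lintegral_ofReal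
    ((cont_gp r s).integrableOn_Icc) (ae_of_all _ (fun y => le_max_right _ _)),
    MeasureTheory.integral_Icc_eq_integral_Ioc, ← intervalIntegral.integral_of_le h0]

lemma int_lin (a b c d : ℝ) : ∫ y in a..b, (c * y + d) = c * (b^2 - a^2)/2 + d * (b - a) := by
  have hd : ∀ y ∈ uIcc a b, HasDerivAt (fun y => c * y^2/2 + d * y) (c * y + d) y := by
    intro y _
    have h1 : HasDerivAt (fun y : ℝ => c * y^2/2 + d * y) (c * (2 * y^(2-1))/2 + d * 1) y :=
      (((hasDerivAt_pow 2 y).const_mul c).div_const 2).add ((hasDerivAt_id y).const_mul d)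
    convert h1 using 1
    simp; ring
  rw [intervalIntegral.integral_eq_sub_of_hasDerivAt hd
    ((continuous_const.mul continuous_id |>.add continuous_const).intervalIntegrable _ _)]
  ring

lemma caseA (r s : ℝ) (hs : 0 ≤ s) (hsr : s ≤ -r) :
    ∫ y in (0:ℝ)..(-r), gp r s y = (r + s)^2 / 4 := by
  have hr : r ≤ 0 := by linarith
  set m : ℝ := (s - r)/2 with hm
  have hsm : s ≤ m := by rw [hm]; linarith
  have hmr : m ≤ -r := by rw [hm]; linarith
  have i1 : ∫ y in (0:ℝ)..s, gp r s y = 0 := by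
    rw [intervalIntegral.integral_congr (g := fun _ => (0:ℝ)) ?_, intervalIntegral.integral_const,
      smul_zero]
    intro y hy
    rw [Set.uIcc_of_le hs] at hy
    exact max_eq_right (le_trans (min_le_right _ _) (by linarith [hy.2]))
  have i2 : ∫ y in s..m, gp r s y = ∫ y in s..m, (1 * y + (-s)) := by
    apply intervalIntegral.integral_congr
    intro y hy
    rw [Set.uIcc_of_le hsm] at hy
    rw [gp, min_eq_right (by linarith [hy.1, hy.2]), max_eq_left (by linarith [hy.1])]
    ring
  have i3 : ∫ y in m..(-r), gp r s y = ∫ y in m..(-r), ((-1) * y + (-r)) := by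
    apply intervalIntegral.integral_congr
    intro y hy
    rw [Set.uIcc_of_le hmr] at hy
    rw [gp, min_eq_left (by linarith [hy.1, hy.2]), max_eq_left (by linarith [hy.2])]
    ring
  have hii : IntervalIntegrable (gp r s) volume 0 s := (cont_gp r s).intervalIntegrable _ _
  rw [← intervalIntegral.integral_add_adjacent_intervals (a := 0) (b := s) (c := -r)
      ((cont_gp r s).intervalIntegrable _ _) ((cont_gp r s).intervalIntegrable _ _),
    ← intervalIntegral.integral_add_adjacent_intervals (a := s) (b := m) (c := -r)
      ((cont_gp r s).intervalIntegrable _ _) ((cont_gp r s).intervalIntegrable _ _),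
    i1, i2, i3, int_lin, int_lin]
  rw [hm]; ring

lemma caseB (r s : ℝ) (hrs : r ≤ s) (hs : s ≤ 0) (hrs2 : r + s ≤ 0) :
    ∫ y in (0:ℝ)..(-r), gp r s y = (r^2 + 2*r*s - s^2) / 4 := by
  set m : ℝ := (s - r)/2 with hm
  have h0m : (0:ℝ) ≤ m := by rw [hm]; linarith
  have hmr : m ≤ -r := by rw [hm]; linarith
  have i2 : ∫ y in (0:ℝ)..m, gp r s y = ∫ y in (0:ℝ)..m, (1 * y + (-s)) := by
    apply intervalIntegral.integral_congr
    intro y hy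
    rw [Set.uIcc_of_le h0m] at hy
    rw [gp, min_eq_right (by linarith [hy.1, hy.2]), max_eq_left (by linarith [hy.1])]
    ring
  have i3 : ∫ y in m..(-r), gp r s y = ∫ y in m..(-r), ((-1) * y + (-r)) := by
    apply intervalIntegral.integral_congr
    intro y hy
    rw [Set.uIcc_of_le hmr] at hy
    rw [gp, min_eq_left (by linarith [hy.1, hy.2]), max_eq_left (by linarith [hy.2])]
    ring
  rw [← intervalIntegral.integral_add_adjacent_intervals (a := 0) (b := m) (c := -r)
      ((cont_gp r s).intervalIntegrable _ _) ((cont_gp r s).intervalIntegrable _ _),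
    i2, i3, int_lin, int_lin]
  rw [hm]; ring

lemma caseC (r s : ℝ) (hsr : s ≤ r) (hr : r ≤ 0) :
    ∫ y in (0:ℝ)..(-r), gp r s y = r^2 / 2 := by
  have h0r : (0:ℝ) ≤ -r := by linarith
  have i : ∫ y in (0:ℝ)..(-r), gp r s y = ∫ y in (0:ℝ)..(-r), ((-1) * y + (-r)) := by
    apply intervalIntegral.integral_congr
    intro y hy
    rw [Set.uIcc_of_le h0r] at hy
    rw [gp, min_eq_left (by linarith [hy.1, hy.2]), max_eq_left (by linarith [hy.2])]
    ring
  rw [i, int_lin]; ring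

lemma caseD (r s : ℝ) (hD : 0 ≤ r ∨ -r ≤ s) :
    ∫⁻ y in Ici (0:ℝ), ENNReal.ofReal (min (-y - r) (y - s)) = 0 := by
  rw [setLIntegral_congr_fun measurableSet_Ici
    (fun y (hy : y ∈ Ici (0:ℝ)) => ?_), lintegral_zero]
  simp only [mem_Ici] at hy
  have hmin : min (-y - r) (y - s) ≤ 0 := by
    rcases hD with h | h
    · exact le_trans (min_le_left _ _) (by linarith)
    · rcases le_total y (-r) with h2 | h2
      · exact le_trans (min_le_right _ _) (by linarith)
      · exact le_trans (min_le_left _ _) (by linarith)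
  exact ENNReal.ofReal_eq_zero.2 hmin

lemma oneD (r s : ℝ) :
    ∫⁻ y in Ici (0:ℝ), ENNReal.ofReal (min (-y - r) (y - s))
      = ENNReal.ofReal (16 * pDen r s) := by
  by_cases hA : 0 ≤ s ∧ s ≤ -r
  · rw [int_Ici r s (by linarith [hA.1, hA.2]), caseA r s hA.1 hA.2, pDen, if_pos hA]
    congr 1; ring
  · by_cases hB : r ≤ s ∧ s ≤ 0
    · have hs' : s < 0 := by
        rcases lt_or_eq_of_le hB.2 with h | h
        · exact h
        · exfalso; push_neg at hA; have := hA (by rw [h]); rw [h] at this; linarith [hB.1]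
      rw [int_Ici r s (by linarith [hB.1]), caseB r s hB.1 hB.2 (by linarith [hB.1]), pDen,
        if_neg hA, if_pos hB]
      congr 1; ring
    · by_cases hC : s ≤ r ∧ r ≤ 0
      · rw [int_Ici r s hC.2, caseC r s hC.1 hC.2, pDen, if_neg hA, if_neg hB, if_pos hC]
        congr 1; ring
      · have hD : 0 ≤ r ∨ -r ≤ s := by
          by_contra h
          push_neg at h
          obtain ⟨h1, h2⟩ := h
          rcases le_or_gt 0 s with hs | hs
          · exact hA ⟨hs, by linarith⟩
          · rcases le_or_gt r s with hrs | hrs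
            · exact hB ⟨hrs, by linarith⟩
            · exact hC ⟨by linarith, by linarith⟩
        rw [caseD r s hD, pDen, if_neg hA, if_neg hB, if_neg hC, mul_zero, ENNReal.ofReal_zero]


def C₁ : Set (ℝ × ℝ) := {z | 0 ≤ z.2 ∧ z.1 + z.2 ≤ 0}
def C₂ : Set (ℝ × ℝ) := {z | z.1 ≤ 0 ∧ z.2 ≤ z.1}

lemma measC₁ : MeasurableSet C₁ :=
  (measurableSet_le measurable_const measurable_snd).inter
    (measurableSet_le (measurable_fst.add measurable_snd) measurable_const)

lemma measC₂ : MeasurableSet C₂ :=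
  (measurableSet_le measurable_fst measurable_const).inter
    (measurableSet_le measurable_snd measurable_fst)

lemma inner_eval (r s y : ℝ) :
    ∫⁻ x : ℝ, C₁.indicator 1 (x, y) * C₂.indicator 1 (r - x, s - y)
      = (Ici (0:ℝ)).indicator (fun y => ENNReal.ofReal (min (-y - r) (y - s))) y := by
  by_cases hy : y ∈ Ici (0:ℝ)
  · have hy' : (0:ℝ) ≤ y := hy
    rw [Set.indicator_of_mem hy]
    have key : ∀ x : ℝ, C₁.indicator 1 (x, y) * C₂.indicator (1 : ℝ × ℝ → ℝ≥0∞) (r - x, s - y)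
        = (Icc r (min (-y) (y + r - s))).indicator 1 x := by
      intro x
      by_cases h1 : ((x, y) : ℝ × ℝ) ∈ C₁
      · by_cases h2 : ((r - x, s - y) : ℝ × ℝ) ∈ C₂
        · rw [Set.indicator_of_mem h1, Set.indicator_of_mem h2, Set.indicator_of_mem]
          · simp
          · simp only [C₁, C₂, Set.mem_setOf_eq] at h1 h2
            exact Set.mem_Icc.2 ⟨by linarith [h2.1], le_min (by linarith [h1.2])
              (by linarith [h2.2])⟩
        · rw [Set.indicator_of_notMem h2, mul_zero, Set.indicator_of_notMem]
          intro hx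
          rw [Set.mem_Icc, le_min_iff] at hx
          exact h2 ⟨show r - x ≤ 0 by linarith [hx.1], show s - y ≤ r - x by linarith [hx.2.2]⟩
      · rw [Set.indicator_of_notMem h1, zero_mul, Set.indicator_of_notMem]
        intro hx
        rw [Set.mem_Icc, le_min_iff] at hx
        exact h1 ⟨hy', show x + y ≤ 0 by linarith [hx.2.1]⟩
    simp_rw [key]
    rw [lintegral_indicator_one measurableSet_Icc, Real.volume_Icc]
    congr 1
    rcases le_total (-y) (y + r - s) with h | h
    · rw [min_eq_left h, min_eq_left (by linarith : -y - r ≤ y - s)]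
    · rw [min_eq_right h, min_eq_right (by linarith : y - s ≤ -y - r)]; ring
  · rw [Set.indicator_of_notMem hy]
    have : ∀ x : ℝ, C₁.indicator 1 (x, y) * C₂.indicator (1 : ℝ × ℝ → ℝ≥0∞) (r - x, s - y) = 0 := by
      intro x
      rw [Set.indicator_of_notMem, zero_mul]
      intro h1
      exact hy (h1.1 : (0:ℝ) ≤ y)
    simp_rw [this, lintegral_zero]


noncomputable def Lmap (u v : ℝ × ℝ) : (ℝ × ℝ) →ₗ[ℝ] (ℝ × ℝ) :=
  (LinearMap.fst ℝ ℝ ℝ).smulRight u + (LinearMap.snd ℝ ℝ ℝ).smulRight v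


lemma mapL_restrict (u v : ℝ × ℝ) (C : Set (ℝ × ℝ)) (hC : MeasurableSet C)
    (hdet : LinearMap.det (Lmap u v) = 4)
    (hpre : (Lmap u v) ⁻¹' C = Ici (0:ℝ) ×ˢ Ici (0:ℝ)) :
    Measure.map (Lmap u v) ((volume : Measure (ℝ × ℝ)).restrict (Ici (0:ℝ) ×ˢ Ici (0:ℝ)))
      = ENNReal.ofReal (4 : ℝ)⁻¹ • (volume : Measure (ℝ × ℝ)).restrict C := by
  rw [← hpre, ← Measure.restrict_map (Lmap u v).continuous_of_finiteDimensional.measurable hC,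
    Measure.map_linearMap_addHaar_eq_smul_addHaar _ (by rw [hdet]; norm_num), hdet]
  rw [Measure.restrict_smul]
  norm_num [abs_of_nonneg]

lemma pre1 : (Lmap (-2,2) (-2,0)) ⁻¹' C₁ = Ici (0:ℝ) ×ˢ Ici (0:ℝ) := by
  ext ⟨a, b⟩
  simp only [Set.mem_preimage, C₁, Set.mem_setOf_eq, Lmap, LinearMap.add_apply,
    LinearMap.smulRight_apply, LinearMap.fst_apply, LinearMap.snd_apply, Set.mem_prod,
    Set.mem_Ici, Prod.smul_mk, Prod.mk_add_mk, smul_eq_mul]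
  constructor <;> rintro ⟨h1, h2⟩ <;> constructor <;> nlinarith

lemma pre2 : (Lmap (-2,-2) (0,-2)) ⁻¹' C₂ = Ici (0:ℝ) ×ˢ Ici (0:ℝ) := by
  ext ⟨a, b⟩
  simp only [Set.mem_preimage, C₂, Set.mem_setOf_eq, Lmap, LinearMap.add_apply,
    LinearMap.smulRight_apply, LinearMap.fst_apply, LinearMap.snd_apply, Set.mem_prod,
    Set.mem_Ici, Prod.smul_mk, Prod.mk_add_mk, smul_eq_mul]
  constructor <;> rintro ⟨h1, h2⟩ <;> constructor <;> nlinarith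

lemma det1 : LinearMap.det (Lmap (-2,2) (-2,0)) = 4 := by
  rw [← LinearMap.det_toMatrix (Module.Basis.finTwoProd ℝ), Matrix.det_fin_two]
  simp [LinearMap.toMatrix_apply, Lmap, Module.Basis.finTwoProd]
  norm_num

lemma det2 : LinearMap.det (Lmap (-2,-2) (0,-2)) = 4 := by
  rw [← LinearMap.det_toMatrix (Module.Basis.finTwoProd ℝ), Matrix.det_fin_two]
  simp [LinearMap.toMatrix_apply, Lmap, Module.Basis.finTwoProd]
  norm_num




lemma Hconv (u v : ℝ × ℝ) :
    (Hmeas u).conv (Hmeas v)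
      = Measure.map (Lmap u v) ((volume : Measure (ℝ × ℝ)).restrict (Ici (0:ℝ) ×ˢ Ici (0:ℝ))) := by
  rw [Measure.conv, Hmeas, Hmeas, Measure.map_prod_map _ _ (by fun_prop) (by fun_prop),
    Measure.map_map (by fun_prop) (by fun_prop),
    Measure.volume_eq_prod, Measure.prod_restrict]
  rfl


lemma conv_assoc (μ ν ρ : Measure (ℝ × ℝ)) [SFinite μ] [SFinite ν] [SFinite ρ] :
    (μ.conv ν).conv ρ = μ.conv (ν.conv ρ) := by
  simp only [Measure.conv]
  conv_lhs => rw [← Measure.map_id (μ := ρ)]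
  conv_rhs => rw [← Measure.map_id (μ := μ)]
  rw [Measure.map_prod_map _ _ (by fun_prop) measurable_id,
      Measure.map_prod_map _ _ measurable_id (by fun_prop),
      Measure.map_map (by fun_prop) (by fun_prop),
      Measure.map_map (by fun_prop) (by fun_prop),
      ← Measure.prodAssoc_prod,
      Measure.map_map (by fun_prop) (by fun_prop)]
  congr 1
  funext ⟨⟨a, b⟩, c⟩
  simp [MeasurableEquiv.prodAssoc, add_assoc]



lemma prod_smul_left (c : ℝ≥0∞) (μ ν : Measure (ℝ × ℝ)) [SFinite μ] [SFinite ν] :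
    (c • μ).prod ν = c • (μ.prod ν) := by
  ext S hS
  rw [Measure.prod_apply hS, Measure.smul_apply, Measure.prod_apply hS,
    lintegral_smul_measure, smul_eq_mul]

lemma prod_smul_right (c : ℝ≥0∞) (μ ν : Measure (ℝ × ℝ)) [SFinite μ] [SFinite ν] :
    μ.prod (c • ν) = c • (μ.prod ν) := by
  ext S hS
  rw [Measure.prod_apply hS, Measure.smul_apply, Measure.prod_apply hS, smul_eq_mul,
    ← lintegral_const_mul _ (measurable_measure_prodMk_left hS)]
  simp only [Measure.smul_apply, smul_eq_mul]

lemma conv_smul (c d : ℝ≥0∞) (μ ν : Measure (ℝ × ℝ)) [SFinite μ] [SFinite ν] :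
    (c • μ).conv (d • ν) = (c * d) • (μ.conv ν) := by
  simp only [Measure.conv, prod_smul_left, prod_smul_right, smul_smul, Measure.map_smul,
    mul_comm]



lemma qval (z : ℝ × ℝ) :
    ∫⁻ x : ℝ × ℝ, C₁.indicator 1 x * C₂.indicator 1 (z - x)
      = ENNReal.ofReal (16 * pDen z.1 z.2) := by
  obtain ⟨r, s⟩ := z
  have hmeas : Measurable fun x : ℝ × ℝ => C₁.indicator (1 : ℝ × ℝ → ℝ≥0∞) x
      * C₂.indicator 1 ((r, s) - x) :=
    (measurable_one.indicator measC₁).mul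
      ((measurable_one.indicator measC₂).comp (measurable_const.sub measurable_id))
  rw [Measure.volume_eq_prod, lintegral_prod_symm _ hmeas.aemeasurable]
  have key : ∀ y x : ℝ, C₁.indicator (1 : ℝ × ℝ → ℝ≥0∞) (x, y) * C₂.indicator 1 ((r, s) - (x, y))
      = C₁.indicator 1 (x, y) * C₂.indicator 1 (r - x, s - y) := fun y x => rfl
  simp_rw [key, inner_eval]
  rw [lintegral_indicator measurableSet_Ici, oneD]

lemma indicator_mul_aux (A : Set (ℝ × ℝ)) (f : (ℝ × ℝ) → ℝ≥0∞) (x : ℝ × ℝ) :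
    A.indicator f x = A.indicator 1 x * f x := by
  by_cases h : x ∈ A <;> simp [h]

lemma indicator_ne_top (A : Set (ℝ × ℝ)) (x : ℝ × ℝ) :
    A.indicator (1 : (ℝ × ℝ) → ℝ≥0∞) x ≠ ⊤ := by
  by_cases h : x ∈ A <;> simp [h]

lemma conv_restrict :
    ((volume : Measure (ℝ × ℝ)).restrict C₁).conv ((volume : Measure (ℝ × ℝ)).restrict C₂)
      = (volume : Measure (ℝ × ℝ)).withDensity
          (fun z => ENNReal.ofReal (16 * pDen z.1 z.2)) := by
  ext S hS
  rw [Measure.conv, Measure.map_apply measurable_add hS,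
    Measure.prod_apply (measurable_add hS), withDensity_apply _ hS]
  have step1 : ∀ x : ℝ × ℝ,
      (volume.restrict C₂) (Prod.mk x ⁻¹' ((fun p : (ℝ × ℝ) × (ℝ × ℝ) => p.1 + p.2) ⁻¹' S))
        = ∫⁻ z, C₂.indicator 1 (z - x) * S.indicator 1 z := by
    intro x
    have hAm : MeasurableSet {y : ℝ × ℝ | x + y ∈ S} :=
      (measurable_const.add measurable_id) hS
    have hpre : (Prod.mk x ⁻¹' ((fun p : (ℝ × ℝ) × (ℝ × ℝ) => p.1 + p.2) ⁻¹' S))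
        = {y | x + y ∈ S} := rfl
    rw [hpre, Measure.restrict_apply hAm,
      ← lintegral_indicator_one (hAm.inter measC₂)]
    have ind2 : ∀ y : ℝ × ℝ, ({y | x + y ∈ S} ∩ C₂).indicator (1 : (ℝ×ℝ) → ℝ≥0∞) y
        = C₂.indicator 1 (y + x - x) * S.indicator 1 (x + y) := by
      intro y
      have : y + x - x = y := by abel
      rw [this]
      by_cases h1 : y ∈ C₂ <;> by_cases h2 : x + y ∈ S <;>
        simp [Set.indicator_apply, Set.mem_inter_iff, h1, h2]
    simp_rw [ind2]
    have := lintegral_add_left_eq_self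
      (μ := (volume : Measure (ℝ × ℝ)))
      (f := fun z => C₂.indicator 1 (z - x) * S.indicator 1 z) x
    rw [← this]
    congr 1
    funext y
    congr 2
    abel
  simp_rw [step1]
  rw [← lintegral_indicator measC₁]
  have step2 : ∀ x : ℝ × ℝ,
      C₁.indicator (fun x => ∫⁻ z, C₂.indicator 1 (z - x) * S.indicator 1 z) x
        = ∫⁻ z, C₁.indicator 1 x * (C₂.indicator 1 (z - x) * S.indicator 1 z) := by
    intro x
    rw [indicator_mul_aux, ← lintegral_const_mul' _ _ (indicator_ne_top C₁ x)]
  simp_rw [step2]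
  rw [lintegral_lintegral_swap]
  · have step3 : ∀ z : ℝ × ℝ,
        ∫⁻ x, C₁.indicator 1 x * (C₂.indicator 1 (z - x) * S.indicator 1 z)
          = S.indicator 1 z * ENNReal.ofReal (16 * pDen z.1 z.2) := by
      intro z
      have rearr : ∀ x : ℝ × ℝ, C₁.indicator (1 : (ℝ×ℝ)→ℝ≥0∞) x
          * (C₂.indicator 1 (z - x) * S.indicator 1 z)
          = S.indicator 1 z * (C₁.indicator 1 x * C₂.indicator 1 (z - x)) := by
        intro x; ring
      simp_rw [rearr]
      rw [lintegral_const_mul' _ _ (indicator_ne_top S z), qval]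
    simp_rw [step3]
    have step4 : ∀ z : ℝ × ℝ, S.indicator (1 : (ℝ×ℝ)→ℝ≥0∞) z * ENNReal.ofReal (16 * pDen z.1 z.2)
        = S.indicator (fun z => ENNReal.ofReal (16 * pDen z.1 z.2)) z := by
      intro z; by_cases h : z ∈ S <;> simp [h]
    simp_rw [step4]
    rw [lintegral_indicator hS]
  · apply Measurable.aemeasurable
    apply Measurable.mul
    · exact (measurable_one.indicator measC₁).comp measurable_fst
    · apply Measurable.mul
      · exact (measurable_one.indicator measC₂).comp (measurable_snd.sub measurable_fst)
      · exact (measurable_one.indicator hS).comp measurable_snd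

theorem conv_Hmeas_eq_withDensity_pDen :
    (Hmeas (-2, 2)).conv ((Hmeas (-2, 0)).conv ((Hmeas (-2, -2)).conv (Hmeas (0, -2))))
      = (volume : Measure (ℝ × ℝ)).withDensity
          (fun z => ENNReal.ofReal (pDen z.1 z.2)) := by
  have hsf : ∀ v : ℝ × ℝ, SFinite (Hmeas v) := fun v => by
    rw [Hmeas]; infer_instance
  have h1 := hsf (-2, 2); have h2 := hsf (-2, 0); have h3 := hsf (-2, -2); have h4 := hsf (0, -2)
  rw [← conv_assoc, Hconv, Hconv, mapL_restrict _ _ C₁ measC₁ det1 pre1,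
    mapL_restrict _ _ C₂ measC₂ det2 pre2, conv_smul, conv_restrict]
  have hc : ENNReal.ofReal (4:ℝ)⁻¹ * ENNReal.ofReal (4:ℝ)⁻¹ = ENNReal.ofReal (16:ℝ)⁻¹ := by
    rw [← ENNReal.ofReal_mul (by norm_num)]; norm_num
  rw [hc]
  ext S hS
  rw [Measure.smul_apply, withDensity_apply _ hS, withDensity_apply _ hS, smul_eq_mul,
    ← lintegral_const_mul' _ _ (by simp : ENNReal.ofReal (16:ℝ)⁻¹ ≠ ⊤)]
  congr 1
  funext z
  rw [← ENNReal.ofReal_mul (by norm_num)]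
  congr 1
  ring
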